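/- The Riemann sum for the locking threshold converges to π/4 in the continuum limit: if s_j = -S + (j-1)·Δs with Δs = 2S/(N-1) and S = S_N → 1 with (1 - S_N)·N bounded (e.g., S_N = 1 - C/N for a constant C ∈ (0,2)), then (1/4)(1 - 1/N)·∑_{j=1}^N Δs/√(1 - s_j²) → π/4 as N → ∞. -/

import Mathlib

noncomputable def fc (x : ℝ) : ℝ := (Real.sqrt (1 - x^2))⁻¹

lemma fc_nonneg (x : ℝ) : 0 ≤ fc x := inv_nonneg.2 (Real.sqrt_nonneg _)

lemma fc_le_fc {x y : ℝ} (hx2 : x^2 ≤ y^2) (hy : y^2 < 1) : fc x ≤ fc y := by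
  have h1 : (0:ℝ) < 1 - y^2 := by linarith
  exact inv_anti₀ (Real.sqrt_pos.2 h1) (Real.sqrt_le_sqrt (by linarith))

lemma arcsin_sub_le {a b c : ℝ} (ha : -1 < a) (hb : b < 1) (hab : a ≤ b)
    (hc : ∀ x, a ≤ x → x ≤ b → fc x ≤ c) :
    Real.arcsin b - Real.arcsin a ≤ (b - a) * c := by
  rcases eq_or_lt_of_le hab with rfl | hlt
  · simp
  obtain ⟨ξ, hξ, hsl⟩ := exists_hasDerivAt_eq_slope Real.arcsin (fun x => fc x) hlt
    Real.continuous_arcsin.continuousOn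
    (fun x hx => by
      have h1 : x ≠ -1 := by nlinarith [hx.1]
      have h2 : x ≠ 1 := by nlinarith [hx.2]
      have h3 := Real.hasDerivAt_arcsin h1 h2
      rw [one_div] at h3
      exact h3)
  have hba : b - a ≠ 0 := by linarith
  have heq : Real.arcsin b - Real.arcsin a = (b - a) * fc ξ := by
    rw [eq_div_iff hba] at hsl; rw [← hsl]; ring
  rw [heq]
  exact mul_le_mul_of_nonneg_left (hc ξ hξ.1.le hξ.2.le) (by linarith)

lemma le_arcsin_sub {a b c : ℝ} (ha : -1 < a) (hb : b < 1) (hab : a ≤ b)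
    (hc : ∀ x, a ≤ x → x ≤ b → c ≤ fc x) :
    (b - a) * c ≤ Real.arcsin b - Real.arcsin a := by
  rcases eq_or_lt_of_le hab with rfl | hlt
  · simp
  obtain ⟨ξ, hξ, hsl⟩ := exists_hasDerivAt_eq_slope Real.arcsin (fun x => fc x) hlt
    Real.continuous_arcsin.continuousOn
    (fun x hx => by
      have h1 : x ≠ -1 := by nlinarith [hx.1]
      have h2 : x ≠ 1 := by nlinarith [hx.2]
      have h3 := Real.hasDerivAt_arcsin h1 h2
      rw [one_div] at h3
      exact h3)
  have hba : b - a ≠ 0 := by linarith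
  have heq : Real.arcsin b - Real.arcsin a = (b - a) * fc ξ := by
    rw [eq_div_iff hba] at hsl; rw [← hsl]; ring
  rw [heq]
  exact mul_le_mul_of_nonneg_left (hc ξ hξ.1.le hξ.2.le) (by linarith)

-- cell bounds
lemma cell_up_neg {S d a b : ℝ} (hS1 : S < 1) (hd : 0 < d)
    (haS : -S ≤ a) (hb0 : b ≤ 0) (hba : b - a = d) :
    d * fc b ≤ Real.arcsin b - Real.arcsin a := by
  have ha1 : -1 < a := by linarith
  have hb1 : b < 1 := by linarith
  have hab : a ≤ b := by linarith
  have h := le_arcsin_sub (c := fc b) ha1 hb1 hab (fun x hax hxb => by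
    apply fc_le_fc
    · nlinarith
    · nlinarith [(show (0:ℝ) < 1 - x by linarith), (show (0:ℝ) < 1 + x by linarith)])
  rwa [hba] at h

lemma cell_up_pos {S d a b : ℝ} (hS1 : S < 1) (hd : 0 < d)
    (ha0 : 0 ≤ a) (hbS : b ≤ S) (hba : b - a = d) :
    d * fc a ≤ Real.arcsin b - Real.arcsin a := by
  have ha1 : -1 < a := by linarith
  have hb1 : b < 1 := by linarith
  have hab : a ≤ b := by linarith
  have h := le_arcsin_sub (c := fc a) ha1 hb1 hab (fun x hax hxb => by
    apply fc_le_fc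
    · nlinarith
    · nlinarith [(show (0:ℝ) < 1 - x by linarith), (show (0:ℝ) < 1 + x by linarith)])
  rwa [hba] at h

lemma cell_lo_neg {S d a b : ℝ} (hS1 : S < 1) (hd : 0 < d)
    (haS : -S ≤ a) (hb0 : b ≤ 0) (hba : b - a = d) :
    Real.arcsin b - Real.arcsin a ≤ d * fc a := by
  have ha1 : -1 < a := by linarith
  have hb1 : b < 1 := by linarith
  have hab : a ≤ b := by linarith
  have h := arcsin_sub_le (c := fc a) ha1 hb1 hab (fun x hax hxb => by
    apply fc_le_fc
    · nlinarith
    · nlinarith [(show (0:ℝ) < 1 - a by linarith), (show (0:ℝ) < 1 + a by linarith)])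
  rwa [hba] at h

lemma cell_lo_pos {S d a b : ℝ} (hS1 : S < 1) (hd : 0 < d)
    (ha0 : 0 ≤ a) (hbS : b ≤ S) (hba : b - a = d) :
    Real.arcsin b - Real.arcsin a ≤ d * fc b := by
  have ha1 : -1 < a := by linarith
  have hb1 : b < 1 := by linarith
  have hab : a ≤ b := by linarith
  have h := arcsin_sub_le (c := fc b) ha1 hb1 hab (fun x hax hxb => by
    apply fc_le_fc
    · nlinarith
    · nlinarith [(show (0:ℝ) < 1 - b by linarith), (show (0:ℝ) < 1 + b by linarith)])
  rwa [hba] at h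

lemma sum_le_tel {n : ℕ} {t : ℕ → ℝ} (F : ℕ → ℝ)
    (h : ∀ i, i < n → t i ≤ F (i+1) - F i) :
    ∑ i ∈ Finset.range n, t i ≤ F n - F 0 := by
  calc ∑ i ∈ Finset.range n, t i ≤ ∑ i ∈ Finset.range n, (F (i+1) - F i) :=
      Finset.sum_le_sum (fun i hi => h i (Finset.mem_range.1 hi))
    _ = F n - F 0 := Finset.sum_range_sub F n

lemma tel_le_sum {n : ℕ} {t : ℕ → ℝ} (F : ℕ → ℝ)
    (h : ∀ i, i < n → F (i+1) - F i ≤ t i) :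
    F n - F 0 ≤ ∑ i ∈ Finset.range n, t i := by
  calc F n - F 0 = ∑ i ∈ Finset.range n, (F (i+1) - F i) := (Finset.sum_range_sub F n).symm
    _ ≤ ∑ i ∈ Finset.range n, t i :=
      Finset.sum_le_sum (fun i hi => h i (Finset.mem_range.1 hi))

set_option maxHeartbeats 2000000 in
lemma core (S : ℝ) (N : ℕ) (hN : 5 ≤ N) (hS0 : 0 < S) (hS1 : S < 1) :
    2*Real.arcsin S - 2*Real.arcsin (2*S/((N:ℝ)-1)) ≤
      (∑ i ∈ Finset.range N, 2*S/((N:ℝ)-1) * fc (-S + (i:ℝ)*(2*S/((N:ℝ)-1)))) ∧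
    (∑ i ∈ Finset.range N, 2*S/((N:ℝ)-1) * fc (-S + (i:ℝ)*(2*S/((N:ℝ)-1))))
      ≤ 2*Real.arcsin S + 2*(2*S/((N:ℝ)-1)) * fc S := by
  have hN5 : (5:ℝ) ≤ (N:ℝ) := by exact_mod_cast hN
  have hN1 : (0:ℝ) < (N:ℝ)-1 := by linarith
  set d : ℝ := 2*S/((N:ℝ)-1) with hd
  have hd0 : 0 < d := div_pos (by linarith) hN1
  have hNd : ((N:ℝ)-1)*d = 2*S := by rw [hd]; field_simp
  set k : ℕ := (N+1)/2 with hk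
  have hk3 : 3 ≤ k := by omega
  have hkN : k ≤ N-2 := by omega
  have h2k : 2*(k:ℝ) ≤ (N:ℝ)+1 := by exact_mod_cast (show 2*k ≤ N+1 by omega)
  have h2k' : (N:ℝ)-1 ≤ 2*(k:ℝ) := by
    have : (N:ℝ) ≤ 2*(k:ℝ)+1 := by exact_mod_cast (show N ≤ 2*k+1 by omega)
    linarith
  have hBr : ((k:ℝ)-1) * d ≤ S := by
    rw [hd, ← mul_div_assoc, div_le_iff₀ hN1]; nlinarith
  have hAr : S ≤ (k:ℝ) * d := by
    rw [hd, ← mul_div_assoc, le_div_iff₀ hN1]; nlinarith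
  have hF0 : Real.arcsin (-S + ((0:ℕ):ℝ)*d) = -Real.arcsin S := by
    norm_num [Real.arcsin_neg]
  have hfcS : fc (-S) = fc S := by unfold fc; rw [neg_pow]; norm_num
  have s0 : ∑ i ∈ Finset.Ico (0:ℕ) 1, d * fc (-S + (i:ℝ)*d) = d * fc S := by
    simp [Finset.sum_Ico_eq_sum_range, hfcS]
  have slastval : -S + ((N-1:ℕ):ℝ)*d = S := by
    rw [Nat.cast_sub (by omega : 1 ≤ N)]; push_cast; linarith [hNd]
  have slast : ∑ i ∈ Finset.Ico (N-1) N, d * fc (-S + (i:ℝ)*d) = d * fc S := by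
    rw [Finset.sum_Ico_eq_sum_range, (show N - (N-1) = 1 by omega), Finset.sum_range_one,
      (show N - 1 + 0 = N - 1 by omega), slastval]
  have hgk1le0 : -S + ((k-1:ℕ):ℝ)*d ≤ 0 := by
    rw [Nat.cast_sub (by omega : 1 ≤ k)]; push_cast; linarith
  have hgk1ged : -d ≤ -S + ((k-1:ℕ):ℝ)*d := by
    rw [Nat.cast_sub (by omega : 1 ≤ k)]; push_cast; nlinarith
  have hgk0 : 0 ≤ -S + (k:ℝ)*d := by linarith
  have hgkd : -S + (k:ℝ)*d ≤ d := by nlinarith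
  -- block [1, k) : upper
  have s1 : ∑ i ∈ Finset.Ico 1 k, d * fc (-S + (i:ℝ)*d) ≤ Real.arcsin S := by
    rw [Finset.sum_Ico_eq_sum_range]
    have h := sum_le_tel (n := k-1) (t := fun i => d * fc (-S + ((1+i:ℕ):ℝ)*d))
      (fun j => Real.arcsin (-S + (j:ℝ)*d)) (fun i hi => by
        rw [(show 1+i = i+1 by omega)]
        apply cell_up_neg hS1 hd0
        · nlinarith [Nat.cast_nonneg (α := ℝ) i]
        · have hc : (i:ℝ)+2 ≤ (k:ℝ) := by exact_mod_cast (show i+2 ≤ k by omega)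
          push_cast; nlinarith
        · push_cast; ring)
    refine le_trans h ?_
    rw [hF0]
    have e1 : Real.arcsin (-S + ((k-1:ℕ):ℝ)*d) ≤ 0 := Real.arcsin_nonpos.2 hgk1le0
    linarith
  -- block [k, N-1) : upper
  have s2 : ∑ i ∈ Finset.Ico k (N-1), d * fc (-S + (i:ℝ)*d) ≤ Real.arcsin S := by
    rw [Finset.sum_Ico_eq_sum_range]
    have h := sum_le_tel (n := N-1-k) (t := fun i => d * fc (-S + ((k+i:ℕ):ℝ)*d))
      (fun j => Real.arcsin (-S + ((k+j:ℕ):ℝ)*d)) (fun i hi => by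
        apply cell_up_pos hS1 hd0
        · have hc : (k:ℝ) ≤ ((k+i:ℕ):ℝ) := by exact_mod_cast (show k ≤ k+i by omega)
          nlinarith
        · have hc : ((k+(i+1):ℕ):ℝ) ≤ (N:ℝ)-1 := by
            have h9 : ((k+(i+1):ℕ):ℝ) ≤ ((N-1:ℕ):ℝ) := by
              exact_mod_cast (show k+(i+1) ≤ N-1 by omega)
            rw [Nat.cast_sub (by omega : 1 ≤ N)] at h9; push_cast at h9 ⊢; linarith
          push_cast at hc ⊢; nlinarith
        · push_cast; ring)
    rw [(show k + (N-1-k) = N-1 by omega), (show k + 0 = k by omega), slastval] at h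
    refine le_trans h ?_
    have e1 : 0 ≤ Real.arcsin (-S + (k:ℝ)*d) := Real.arcsin_nonneg.2 hgk0
    linarith
  have upper : (∑ i ∈ Finset.range N, d * fc (-S + (i:ℝ)*d))
      ≤ 2*Real.arcsin S + 2*d * fc S := by
    rw [Finset.range_eq_Ico,
      ← Finset.sum_Ico_consecutive _ (by omega : 0 ≤ N-1) (by omega : N-1 ≤ N),
      ← Finset.sum_Ico_consecutive _ (by omega : 0 ≤ k) (by omega : k ≤ N-1),
      ← Finset.sum_Ico_consecutive _ (by omega : 0 ≤ 1) (by omega : 1 ≤ k)]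
    rw [s0, slast]
    linarith [s1, s2]
  -- lower bound blocks
  have t1 : Real.arcsin (-S + ((k-1:ℕ):ℝ)*d) + Real.arcsin S
      ≤ ∑ i ∈ Finset.Ico (0:ℕ) (k-1), d * fc (-S + (i:ℝ)*d) := by
    rw [← Finset.range_eq_Ico]
    have h := tel_le_sum (n := k-1) (t := fun i => d * fc (-S + (i:ℝ)*d))
      (fun j => Real.arcsin (-S + (j:ℝ)*d)) (fun i hi => by
        apply cell_lo_neg hS1 hd0
        · nlinarith [Nat.cast_nonneg (α := ℝ) i]
        · have hc : (i:ℝ)+2 ≤ (k:ℝ) := by exact_mod_cast (show i+2 ≤ k by omega)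
          push_cast; nlinarith
        · push_cast; ring)
    rw [hF0] at h
    linarith
  have t2 : (0:ℝ) ≤ ∑ i ∈ Finset.Ico (k-1) (k+1), d * fc (-S + (i:ℝ)*d) :=
    Finset.sum_nonneg (fun i _ => mul_nonneg hd0.le (fc_nonneg _))
  have t3 : Real.arcsin S - Real.arcsin (-S + (k:ℝ)*d)
      ≤ ∑ i ∈ Finset.Ico (k+1) N, d * fc (-S + (i:ℝ)*d) := by
    rw [Finset.sum_Ico_eq_sum_range]
    have h := tel_le_sum (n := N-(k+1)) (t := fun i => d * fc (-S + ((k+1+i:ℕ):ℝ)*d))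
      (fun j => Real.arcsin (-S + ((k+j:ℕ):ℝ)*d)) (fun i hi => by
        rw [(show k+1+i = k+(i+1) by omega)]
        apply cell_lo_pos hS1 hd0
        · have hc : (k:ℝ) ≤ ((k+i:ℕ):ℝ) := by exact_mod_cast (show k ≤ k+i by omega)
          nlinarith
        · have hc : ((k+(i+1):ℕ):ℝ) ≤ (N:ℝ)-1 := by
            have h9 : ((k+(i+1):ℕ):ℝ) ≤ ((N-1:ℕ):ℝ) := by
              exact_mod_cast (show k+(i+1) ≤ N-1 by omega)
            rw [Nat.cast_sub (by omega : 1 ≤ N)] at h9; push_cast at h9 ⊢; linarith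
          push_cast at hc ⊢; nlinarith
        · push_cast; ring)
    rw [(show k + (N-(k+1)) = N-1 by omega), (show k + 0 = k by omega), slastval] at h
    exact h
  have lower : 2*Real.arcsin S - 2*Real.arcsin d
      ≤ ∑ i ∈ Finset.range N, d * fc (-S + (i:ℝ)*d) := by
    rw [Finset.range_eq_Ico,
      ← Finset.sum_Ico_consecutive _ (by omega : 0 ≤ k+1) (by omega : k+1 ≤ N),
      ← Finset.sum_Ico_consecutive _ (by omega : 0 ≤ k-1) (by omega : k-1 ≤ k+1)]
    have e1 : Real.arcsin (-d) ≤ Real.arcsin (-S + ((k-1:ℕ):ℝ)*d) :=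
      Real.monotone_arcsin hgk1ged
    have e2 : Real.arcsin (-S + (k:ℝ)*d) ≤ Real.arcsin d := Real.monotone_arcsin hgkd
    rw [Real.arcsin_neg] at e1
    linarith [t1, t2, t3]
  exact ⟨lower, upper⟩

lemma sqrt_nat_inv_tendsto : Filter.Tendsto (fun N : ℕ => (Real.sqrt (N:ℝ))⁻¹)
    Filter.atTop (nhds 0) := by
  apply Filter.Tendsto.inv_tendsto_atTop
  have hsq : Filter.Tendsto Real.sqrt Filter.atTop Filter.atTop := by
    apply Filter.tendsto_atTop_atTop_of_monotone (fun a b h => Real.sqrt_le_sqrt h)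
    intro b; exact ⟨(max b 0)^2, by rw [Real.sqrt_sq (le_max_right b 0)]; exact le_max_left b 0⟩
  exact hsq.comp (tendsto_natCast_atTop_atTop (R := ℝ))

theorem stmt_7 (C : ℝ) (hC : C ∈ Set.Ioo (0 : ℝ) 2) :
    Filter.Tendsto
      (fun N : ℕ =>
        (1 / 4) * (1 - 1 / (N : ℝ)) *
          ∑ j ∈ Finset.Icc 1 N,
            (2 * (1 - C / (N : ℝ)) / ((N : ℝ) - 1)) /
              Real.sqrt (1 - (-(1 - C / (N : ℝ)) +
                ((j : ℝ) - 1) * (2 * (1 - C / (N : ℝ)) / ((N : ℝ) - 1))) ^ 2))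
      Filter.atTop (nhds (Real.pi / 4)) := by
  obtain ⟨hC0, hC2⟩ := hC
  -- limit components
  have hSt : Filter.Tendsto (fun N : ℕ => 1 - C/(N:ℝ)) Filter.atTop (nhds 1) := by
    have h := (tendsto_one_div_atTop_nhds_zero_nat).const_mul C
    have h2 := (tendsto_const_nhds (α := ℕ) (x := (1:ℝ))).sub h
    have he : (fun N : ℕ => 1 - C * (1/(N:ℝ))) = fun N : ℕ => 1 - C/(N:ℝ) := by
      funext N; ring
    rw [he] at h2; simpa using h2
  have h14 : Filter.Tendsto (fun N : ℕ => 1/4 * (1 - 1/(N:ℝ))) Filter.atTop (nhds (1/4)) := by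
    have h2 := ((tendsto_const_nhds (α := ℕ) (x := (1:ℝ))).sub
      tendsto_one_div_atTop_nhds_zero_nat).const_mul (1/4 : ℝ)
    simpa using h2
  have harcS : Filter.Tendsto (fun N : ℕ => Real.arcsin (1 - C/(N:ℝ))) Filter.atTop
      (nhds (Real.pi/2)) := by
    have := (Real.continuous_arcsin.tendsto 1).comp hSt
    rwa [Real.arcsin_one] at this
  have hden : Filter.Tendsto (fun N : ℕ => (N:ℝ) - 1) Filter.atTop Filter.atTop := by
    have := Filter.tendsto_atTop_add_const_right Filter.atTop (-1 : ℝ)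
      (tendsto_natCast_atTop_atTop (R := ℝ))
    simpa [sub_eq_add_neg] using this
  have hdT : Filter.Tendsto (fun N : ℕ => 2*(1 - C/(N:ℝ))/((N:ℝ)-1)) Filter.atTop (nhds 0) :=
    Filter.Tendsto.div_atTop (hSt.const_mul 2) hden
  have harcd : Filter.Tendsto (fun N : ℕ => Real.arcsin (2*(1 - C/(N:ℝ))/((N:ℝ)-1)))
      Filter.atTop (nhds 0) := by
    have := (Real.continuous_arcsin.tendsto 0).comp hdT
    rwa [Real.arcsin_zero] at this
  -- error term tends to zero
  have hCs : (0:ℝ) < Real.sqrt C := Real.sqrt_pos.2 hC0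
  have he0 : Filter.Tendsto (fun N : ℕ => 2*(2*(1 - C/(N:ℝ))/((N:ℝ)-1)) * fc (1 - C/(N:ℝ)))
      Filter.atTop (nhds 0) := by
    apply tendsto_of_tendsto_of_tendsto_of_le_of_le' (g := fun _ => (0:ℝ))
      (h := fun N : ℕ => (8 / Real.sqrt C) * (Real.sqrt (N:ℝ))⁻¹)
      tendsto_const_nhds (by simpa using (sqrt_nat_inv_tendsto).const_mul (8 / Real.sqrt C))
    · filter_upwards [Filter.eventually_ge_atTop 5] with N hN
      have hN5 : (5:ℝ) ≤ (N:ℝ) := by exact_mod_cast hN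
      have hd0 : (0:ℝ) ≤ 2*(1 - C/(N:ℝ))/((N:ℝ)-1) := by
        apply div_nonneg _ (by linarith)
        have : C/(N:ℝ) < 1 := by rw [div_lt_one (by linarith)]; linarith
        linarith
      exact mul_nonneg (by linarith) (fc_nonneg _)
    · filter_upwards [Filter.eventually_ge_atTop 5] with N hN
      have hN5 : (5:ℝ) ≤ (N:ℝ) := by exact_mod_cast hN
      have hN0 : (0:ℝ) < (N:ℝ) := by linarith
      have hCN1 : C/(N:ℝ) < 1 := by rw [div_lt_one hN0]; linarith
      have hCN0 : 0 < C/(N:ℝ) := div_pos hC0 hN0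
      set S : ℝ := 1 - C/(N:ℝ) with hS
      have hS0 : 0 < S := by rw [hS]; linarith
      have hS1 : S < 1 := by rw [hS]; linarith
      -- fc S ≤ sqrt N / sqrt C
      have key1 : C/(N:ℝ) ≤ 1 - S^2 := by rw [hS]; nlinarith
      have hfc : fc S ≤ Real.sqrt (N:ℝ) / Real.sqrt C := by
        have h1 : Real.sqrt (C/(N:ℝ)) ≤ Real.sqrt (1 - S^2) := Real.sqrt_le_sqrt key1
        have h2 : (0:ℝ) < Real.sqrt (C/(N:ℝ)) := Real.sqrt_pos.2 hCN0
        have h3 : fc S ≤ (Real.sqrt (C/(N:ℝ)))⁻¹ := inv_anti₀ h2 h1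
        rwa [Real.sqrt_div hC0.le, inv_div] at h3
      have hsqN : (0:ℝ) < Real.sqrt (N:ℝ) := Real.sqrt_pos.2 hN0
      have hNs : Real.sqrt (N:ℝ) * Real.sqrt (N:ℝ) = (N:ℝ) := Real.mul_self_sqrt hN0.le
      have hd4 : 2*S/((N:ℝ)-1) ≤ 4/(N:ℝ) := by
        rw [div_le_div_iff₀ (by linarith) hN0]; nlinarith
      have hd0 : (0:ℝ) ≤ 2*S/((N:ℝ)-1) := div_nonneg (by linarith) (by linarith)
      have hfc0 : (0:ℝ) ≤ fc S := fc_nonneg _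
      have step : 2*(2*S/((N:ℝ)-1)) * fc S ≤ 2*(4/(N:ℝ)) * (Real.sqrt (N:ℝ) / Real.sqrt C) := by
        apply mul_le_mul _ hfc hfc0 _
        · linarith
        · positivity
      refine le_trans step (le_of_eq ?_)
      field_simp
      nlinarith [hNs]
  -- squeeze
  apply tendsto_of_tendsto_of_tendsto_of_le_of_le'
    (g := fun N : ℕ => 1/4 * (1 - 1/(N:ℝ)) *
      (2*Real.arcsin (1 - C/(N:ℝ)) - 2*Real.arcsin (2*(1 - C/(N:ℝ))/((N:ℝ)-1))))
    (h := fun N : ℕ => 1/4 * (1 - 1/(N:ℝ)) *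
      (2*Real.arcsin (1 - C/(N:ℝ)) + 2*(2*(1 - C/(N:ℝ))/((N:ℝ)-1)) * fc (1 - C/(N:ℝ))))
  · have := h14.mul ((harcS.const_mul 2).sub (harcd.const_mul 2))
    have heq : (1/4:ℝ) * (2*(Real.pi/2) - 2*0) = Real.pi/4 := by ring
    rwa [heq] at this
  · have := h14.mul ((harcS.const_mul 2).add he0)
    have heq : (1/4:ℝ) * (2*(Real.pi/2) + 0) = Real.pi/4 := by ring
    rwa [heq] at this
  · filter_upwards [Filter.eventually_ge_atTop 5] with N hN
    have hN5 : (5:ℝ) ≤ (N:ℝ) := by exact_mod_cast hN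
    have hN0 : (0:ℝ) < (N:ℝ) := by linarith
    have hCN1 : C/(N:ℝ) < 1 := by rw [div_lt_one hN0]; linarith
    have hCN0 : 0 < C/(N:ℝ) := div_pos hC0 hN0
    obtain ⟨hl, _⟩ := core (1 - C/(N:ℝ)) N hN (by linarith) (by linarith)
    have hsum : (∑ j ∈ Finset.Icc 1 N,
        (2 * (1 - C / (N : ℝ)) / ((N : ℝ) - 1)) /
          Real.sqrt (1 - (-(1 - C / (N : ℝ)) +
            ((j : ℝ) - 1) * (2 * (1 - C / (N : ℝ)) / ((N : ℝ) - 1))) ^ 2))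
        = ∑ i ∈ Finset.range N, 2*(1 - C/(N:ℝ))/((N:ℝ)-1) *
            fc (-(1 - C/(N:ℝ)) + (i:ℝ)*(2*(1 - C/(N:ℝ))/((N:ℝ)-1))) := by
      rw [← Finset.Ico_add_one_right_eq_Icc, Finset.sum_Ico_eq_sum_range]
      simp only [Nat.add_sub_cancel]
      apply Finset.sum_congr rfl
      intro i _
      have hcast : ((1+i:ℕ):ℝ) - 1 = (i:ℝ) := by push_cast; ring
      rw [hcast, div_eq_mul_inv]
      rfl
    have ha : (0:ℝ) ≤ 1/4 * (1 - 1/(N:ℝ)) := by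
      have : 1/(N:ℝ) ≤ 1 := by rw [div_le_one hN0]; linarith
      linarith
    rw [hsum]
    exact mul_le_mul_of_nonneg_left hl ha
  · filter_upwards [Filter.eventually_ge_atTop 5] with N hN
    have hN5 : (5:ℝ) ≤ (N:ℝ) := by exact_mod_cast hN
    have hN0 : (0:ℝ) < (N:ℝ) := by linarith
    have hCN1 : C/(N:ℝ) < 1 := by rw [div_lt_one hN0]; linarith
    have hCN0 : 0 < C/(N:ℝ) := div_pos hC0 hN0
    obtain ⟨_, hu⟩ := core (1 - C/(N:ℝ)) N hN (by linarith) (by linarith)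
    have hsum : (∑ j ∈ Finset.Icc 1 N,
        (2 * (1 - C / (N : ℝ)) / ((N : ℝ) - 1)) /
          Real.sqrt (1 - (-(1 - C / (N : ℝ)) +
            ((j : ℝ) - 1) * (2 * (1 - C / (N : ℝ)) / ((N : ℝ) - 1))) ^ 2))
        = ∑ i ∈ Finset.range N, 2*(1 - C/(N:ℝ))/((N:ℝ)-1) *
            fc (-(1 - C/(N:ℝ)) + (i:ℝ)*(2*(1 - C/(N:ℝ))/((N:ℝ)-1))) := by
      rw [← Finset.Ico_add_one_right_eq_Icc, Finset.sum_Ico_eq_sum_range]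
      simp only [Nat.add_sub_cancel]
      apply Finset.sum_congr rfl
      intro i _
      have hcast : ((1+i:ℕ):ℝ) - 1 = (i:ℝ) := by push_cast; ring
      rw [hcast, div_eq_mul_inv]
      rfl
    have ha : (0:ℝ) ≤ 1/4 * (1 - 1/(N:ℝ)) := by
      have : 1/(N:ℝ) ≤ 1 := by rw [div_le_one hN0]; linarith
      linarith
    rw [hsum]
    exact mul_le_mul_of_nonneg_left hu ha
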